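/- Given a short exact sequence of Fredholm operators between Banach spaces, i.e. a commuting diagram with exact rows 0 → X′ → X → X″ → 0 and 0 → Y′ → Y → Y″ → 0 and Fredholm operators D′: X′ → Y′, D: X → Y, D″: X″ → Y″, there is an exact sequence 0 → ker D′ → ker D → ker D″ → coker D′ → coker D → coker D″ → 0; in particular ind(D) = ind(D′) + ind(D″). -/

import Mathlib

/-- Given a short exact sequence of Fredholm operators between Banach spaces,
i.e. a commuting diagram with exact rows `0 → X' → X → X'' → 0`, `0 → Y' → Y → Y'' → 0`
and Fredholm operators `D' : X' → Y'`, `D : X → Y`, `D'' : X'' → Y''`, there is an exact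
sequence `0 → ker D' → ker D → ker D'' → coker D' → coker D → coker D'' → 0` (with the
first two maps induced by `i`, `p`, the last two induced by `j`, `q`, and a connecting
map `δ`); in particular `ind D = ind D' + ind D''`. -/
theorem fredholm_snake_exact_sequence
    {𝕜 : Type} [NontriviallyNormedField 𝕜]
    {X' X X'' Y' Y Y'' : Type}
    [NormedAddCommGroup X'] [NormedSpace 𝕜 X'] [CompleteSpace X']
    [NormedAddCommGroup X] [NormedSpace 𝕜 X] [CompleteSpace X]
    [NormedAddCommGroup X''] [NormedSpace 𝕜 X''] [CompleteSpace X'']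
    [NormedAddCommGroup Y'] [NormedSpace 𝕜 Y'] [CompleteSpace Y']
    [NormedAddCommGroup Y] [NormedSpace 𝕜 Y] [CompleteSpace Y]
    [NormedAddCommGroup Y''] [NormedSpace 𝕜 Y''] [CompleteSpace Y'']
    (i : X' →L[𝕜] X) (p : X →L[𝕜] X'') (j : Y' →L[𝕜] Y) (q : Y →L[𝕜] Y'')
    (D' : X' →L[𝕜] Y') (D : X →L[𝕜] Y) (D'' : X'' →L[𝕜] Y'')
    (hi : Function.Injective i) (hip : Function.Exact i p) (hp : Function.Surjective p)
    (hj : Function.Injective j) (hjq : Function.Exact j q) (hq : Function.Surjective q)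
    (hcomm₁ : D.comp i = j.comp D') (hcomm₂ : D''.comp p = q.comp D)
    [FiniteDimensional 𝕜 (LinearMap.ker (D' : X' →ₗ[𝕜] Y'))] [FiniteDimensional 𝕜 (LinearMap.ker (D : X →ₗ[𝕜] Y))]
    [FiniteDimensional 𝕜 (LinearMap.ker (D'' : X'' →ₗ[𝕜] Y''))]
    [FiniteDimensional 𝕜 (Y' ⧸ LinearMap.range (D' : X' →ₗ[𝕜] Y'))]
    [FiniteDimensional 𝕜 (Y ⧸ LinearMap.range (D : X →ₗ[𝕜] Y))]
    [FiniteDimensional 𝕜 (Y'' ⧸ LinearMap.range (D'' : X'' →ₗ[𝕜] Y''))] :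
    (∃ (α : LinearMap.ker (D' : X' →ₗ[𝕜] Y') →ₗ[𝕜] LinearMap.ker (D : X →ₗ[𝕜] Y))
        (β : LinearMap.ker (D : X →ₗ[𝕜] Y) →ₗ[𝕜] LinearMap.ker (D'' : X'' →ₗ[𝕜] Y''))
        (δ : LinearMap.ker (D'' : X'' →ₗ[𝕜] Y'') →ₗ[𝕜] Y' ⧸ LinearMap.range (D' : X' →ₗ[𝕜] Y'))
        (ε : (Y' ⧸ LinearMap.range (D' : X' →ₗ[𝕜] Y')) →ₗ[𝕜] Y ⧸ LinearMap.range (D : X →ₗ[𝕜] Y))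
        (ζ : (Y ⧸ LinearMap.range (D : X →ₗ[𝕜] Y)) →ₗ[𝕜] Y'' ⧸ LinearMap.range (D'' : X'' →ₗ[𝕜] Y'')),
      (∀ x : LinearMap.ker (D' : X' →ₗ[𝕜] Y'), (α x : X) = i (x : X')) ∧
      (∀ x : LinearMap.ker (D : X →ₗ[𝕜] Y), (β x : X'') = p (x : X)) ∧
      (∀ y : Y', ε (Submodule.Quotient.mk y) = Submodule.Quotient.mk (j y)) ∧
      (∀ y : Y, ζ (Submodule.Quotient.mk y) = Submodule.Quotient.mk (q y)) ∧
      Function.Injective α ∧ Function.Exact α β ∧ Function.Exact β δ ∧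
      Function.Exact δ ε ∧ Function.Exact ε ζ ∧ Function.Surjective ζ) ∧
    ((Module.finrank 𝕜 (LinearMap.ker (D : X →ₗ[𝕜] Y)) : ℤ)
        - (Module.finrank 𝕜 (Y ⧸ LinearMap.range (D : X →ₗ[𝕜] Y)) : ℤ)
      = ((Module.finrank 𝕜 (LinearMap.ker (D' : X' →ₗ[𝕜] Y')) : ℤ)
          - (Module.finrank 𝕜 (Y' ⧸ LinearMap.range (D' : X' →ₗ[𝕜] Y')) : ℤ))
        + ((Module.finrank 𝕜 (LinearMap.ker (D'' : X'' →ₗ[𝕜] Y'')) : ℤ)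
          - (Module.finrank 𝕜 (Y'' ⧸ LinearMap.range (D'' : X'' →ₗ[𝕜] Y'')) : ℤ))) := by
  classical
  have hc1 : ∀ x, D (i x) = j (D' x) := fun x => DFunLike.congr_fun hcomm₁ x
  have hc2 : ∀ x, D'' (p x) = q (D x) := fun x => DFunLike.congr_fun hcomm₂ x
  -- α
  have hαmem : ∀ x ∈ LinearMap.ker (D' : X' →ₗ[𝕜] Y'), i x ∈ LinearMap.ker (D : X →ₗ[𝕜] Y) := by
    intro x hx
    have hx' : D' x = 0 := hx
    show D (i x) = 0
    rw [hc1 x, hx', map_zero]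
  set α : LinearMap.ker (D' : X' →ₗ[𝕜] Y') →ₗ[𝕜] LinearMap.ker (D : X →ₗ[𝕜] Y) :=
    (i : X' →ₗ[𝕜] X).restrict hαmem with hα
  have hαapp : ∀ x : LinearMap.ker (D' : X' →ₗ[𝕜] Y'), (α x : X) = i (x : X') := fun x => rfl
  -- β
  have hβmem : ∀ x ∈ LinearMap.ker (D : X →ₗ[𝕜] Y), p x ∈ LinearMap.ker (D'' : X'' →ₗ[𝕜] Y'') := by
    intro x hx
    have hx' : D x = 0 := hx
    show D'' (p x) = 0
    rw [hc2 x, hx', map_zero]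
  set β : LinearMap.ker (D : X →ₗ[𝕜] Y) →ₗ[𝕜] LinearMap.ker (D'' : X'' →ₗ[𝕜] Y'') :=
    (p : X →ₗ[𝕜] X'').restrict hβmem with hβ
  have hβapp : ∀ x : LinearMap.ker (D : X →ₗ[𝕜] Y), (β x : X'') = p (x : X) := fun x => rfl
  -- a section σ of p, and a lift τ of D ∘ σ through j, on ker D''
  obtain ⟨σ, hσ⟩ : ∃ σ : X'' → X, ∀ z, p (σ z) = z :=
    ⟨fun z => (hp z).choose, fun z => (hp z).choose_spec⟩
  have hrange : ∀ z : LinearMap.ker (D'' : X'' →ₗ[𝕜] Y''), D (σ (z : X'')) ∈ Set.range j := by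
    intro z
    refine (hjq _).mp ?_
    rw [← hc2, hσ]
    exact z.2
  choose τ hτ using hrange
  -- the connecting map δ
  have key : ∀ (z : LinearMap.ker (D'' : X'' →ₗ[𝕜] Y'')) (x : X) (y' : Y'), p x = (z : X'') → j y' = D x →
      (Submodule.Quotient.mk (τ z) : Y' ⧸ LinearMap.range (D' : X' →ₗ[𝕜] Y')) = Submodule.Quotient.mk y' := by
    intro z x y' hx hy'
    rw [Submodule.Quotient.eq]
    have hpx : p (σ (z : X'') - x) = 0 := by
      rw [map_sub, hσ, hx, sub_self]
    obtain ⟨w, hw⟩ := (hip _).mp hpx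
    have : j (τ z - y') = j (D' w) := by
      rw [map_sub, hτ, hy', ← hc1, ← map_sub, hw]
    exact ⟨w, (hj this).symm⟩
  set δ : LinearMap.ker (D'' : X'' →ₗ[𝕜] Y'') →ₗ[𝕜] Y' ⧸ LinearMap.range (D' : X' →ₗ[𝕜] Y') :=
    { toFun := fun z => Submodule.Quotient.mk (τ z)
      map_add' := by
        intro z₁ z₂
        have h := key (z₁ + z₂) (σ (z₁ : X'') + σ (z₂ : X'')) (τ z₁ + τ z₂)
          (by rw [map_add, hσ, hσ]; rfl)
          (by rw [map_add, hτ, hτ, map_add])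
        show (Submodule.Quotient.mk (τ (z₁ + z₂)) : Y' ⧸ LinearMap.range (D' : X' →ₗ[𝕜] Y'))
            = Submodule.Quotient.mk (τ z₁) + Submodule.Quotient.mk (τ z₂)
        rw [h, Submodule.Quotient.mk_add]
      map_smul' := by
        intro c z
        have h := key (c • z) (c • σ (z : X'')) (c • τ z)
          (by rw [map_smul, hσ]; rfl)
          (by rw [map_smul, hτ, map_smul])
        show (Submodule.Quotient.mk (τ (c • z)) : Y' ⧸ LinearMap.range (D' : X' →ₗ[𝕜] Y'))
            = c • Submodule.Quotient.mk (τ z)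
        rw [h, Submodule.Quotient.mk_smul] } with hδ
  have hδapp : ∀ (z : LinearMap.ker (D'' : X'' →ₗ[𝕜] Y'')) (x : X) (y' : Y'), p x = (z : X'') → j y' = D x →
      δ z = Submodule.Quotient.mk y' := fun z x y' hx hy' => key z x y' hx hy'
  -- ε
  have hεle : LinearMap.range (D' : X' →ₗ[𝕜] Y') ≤ Submodule.comap (j : Y' →ₗ[𝕜] Y) (LinearMap.range (D : X →ₗ[𝕜] Y)) := by
    rintro y ⟨x', rfl⟩
    exact ⟨i x', by simpa using hc1 x'⟩
  set ε : (Y' ⧸ LinearMap.range (D' : X' →ₗ[𝕜] Y')) →ₗ[𝕜] Y ⧸ LinearMap.range (D : X →ₗ[𝕜] Y) :=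
    Submodule.mapQ _ _ (j : Y' →ₗ[𝕜] Y) hεle with hε
  have hεapp : ∀ y : Y', ε (Submodule.Quotient.mk y) = Submodule.Quotient.mk (j y) := by
    intro y
    rw [hε]
    exact Submodule.mapQ_apply _ _ _ _
  -- ζ
  have hζle : LinearMap.range (D : X →ₗ[𝕜] Y) ≤ Submodule.comap (q : Y →ₗ[𝕜] Y'') (LinearMap.range (D'' : X'' →ₗ[𝕜] Y'')) := by
    rintro y ⟨x, rfl⟩
    exact ⟨p x, hc2 x⟩
  set ζ : (Y ⧸ LinearMap.range (D : X →ₗ[𝕜] Y)) →ₗ[𝕜] Y'' ⧸ LinearMap.range (D'' : X'' →ₗ[𝕜] Y'') :=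
    Submodule.mapQ _ _ (q : Y →ₗ[𝕜] Y'') hζle with hζ
  have hζapp : ∀ y : Y, ζ (Submodule.Quotient.mk y) = Submodule.Quotient.mk (q y) := by
    intro y
    rw [hζ]
    exact Submodule.mapQ_apply _ _ _ _
  -- injectivity of α
  have hαinj : Function.Injective α := by
    intro a b hab
    apply Subtype.ext
    apply hi
    rw [← hαapp a, ← hαapp b, hab]
  -- exactness at ker D
  have hexαβ : Function.Exact α β := by
    intro z
    constructor
    · intro hz
      have hz' : p (z : X) = 0 := by
        have h := congrArg Subtype.val hz
        rwa [hβapp z] at h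
      obtain ⟨w, hw⟩ := (hip _).mp hz'
      have hwker : w ∈ LinearMap.ker (D' : X' →ₗ[𝕜] Y') := by
        have h : j (D' w) = j 0 := by
          rw [map_zero, ← hc1, hw]
          exact z.2
        exact hj h
      exact ⟨⟨w, hwker⟩, Subtype.ext (by rw [hαapp]; exact hw)⟩
    · rintro ⟨w, rfl⟩
      apply Subtype.ext
      rw [hβapp, hαapp]
      exact (hip _).mpr ⟨w, rfl⟩
  -- exactness at ker D''
  have hexβδ : Function.Exact β δ := by
    intro z
    constructor
    · intro hz
      have hz' : τ z ∈ LinearMap.range (D' : X' →ₗ[𝕜] Y') := by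
        have : (Submodule.Quotient.mk (τ z) : Y' ⧸ LinearMap.range (D' : X' →ₗ[𝕜] Y')) = 0 := hz
        exact (Submodule.Quotient.mk_eq_zero _).mp this
      obtain ⟨w, hw⟩ := hz'
      have hker : σ (z : X'') - i w ∈ LinearMap.ker (D : X →ₗ[𝕜] Y) := by
        show D (σ (z : X'') - i w) = 0
        rw [map_sub, hc1, show D' w = τ z from hw, ← hτ, sub_self]
      refine ⟨⟨σ (z : X'') - i w, hker⟩, Subtype.ext ?_⟩
      rw [hβapp]
      show p (σ (z : X'') - i w) = (z : X'')
      rw [map_sub, hσ]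
      have : p (i w) = 0 := (hip _).mpr ⟨w, rfl⟩
      rw [this, sub_zero]
    · rintro ⟨x, rfl⟩
      have hx : p (x : X) = ((β x : LinearMap.ker (D'' : X'' →ₗ[𝕜] Y'')) : X'') := (hβapp x).symm
      have h0 : j 0 = D (x : X) := by
        rw [map_zero]
        exact x.2.symm
      rw [hδapp (β x) (x : X) 0 hx h0]
      exact Submodule.Quotient.mk_eq_zero _ |>.mpr (Submodule.zero_mem _)
  -- exactness at coker D'
  have hexδε : Function.Exact δ ε := by
    intro u
    obtain ⟨y', rfl⟩ := Submodule.Quotient.mk_surjective _ u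
    constructor
    · intro hu
      rw [hεapp] at hu
      have : j y' ∈ LinearMap.range (D : X →ₗ[𝕜] Y) := (Submodule.Quotient.mk_eq_zero _).mp hu
      obtain ⟨x, hx⟩ := this
      have hz : p x ∈ LinearMap.ker (D'' : X'' →ₗ[𝕜] Y'') := by
        show D'' (p x) = 0
        rw [hc2, show D x = j y' from hx]
        exact (hjq _).mpr ⟨y', rfl⟩
      exact ⟨⟨p x, hz⟩, (hδapp ⟨p x, hz⟩ x y' rfl hx.symm).symm ▸ rfl⟩
    · rintro ⟨z, hzeq⟩
      rw [← hzeq]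
      show ε (Submodule.Quotient.mk (τ z)) = 0
      rw [hεapp, hτ]
      exact (Submodule.Quotient.mk_eq_zero _).mpr ⟨σ (z : X''), rfl⟩
  -- exactness at coker D
  have hexεζ : Function.Exact ε ζ := by
    intro u
    obtain ⟨y, rfl⟩ := Submodule.Quotient.mk_surjective _ u
    constructor
    · intro hu
      rw [hζapp] at hu
      obtain ⟨z'', hz''⟩ := (Submodule.Quotient.mk_eq_zero _).mp hu
      obtain ⟨x, rfl⟩ := hp z''
      have hqy : q (y - D x) = 0 := by
        rw [map_sub, ← hc2, show D'' (p x) = q y from hz'', sub_self]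
      obtain ⟨y', hy'⟩ := (hjq _).mp hqy
      refine ⟨Submodule.Quotient.mk y', ?_⟩
      rw [hεapp, hy', Submodule.Quotient.eq]
      exact ⟨-x, by rw [map_neg]; abel⟩
    · rintro ⟨v, hveq⟩
      rw [← hveq]
      obtain ⟨y', rfl⟩ := Submodule.Quotient.mk_surjective _ v
      rw [hεapp, hζapp]
      refine (Submodule.Quotient.mk_eq_zero _).mpr ?_
      have : q (j y') = 0 := (hjq _).mpr ⟨y', rfl⟩
      rw [this]
      exact Submodule.zero_mem _
  -- surjectivity of ζ
  have hζsurj : Function.Surjective ζ := by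
    intro u
    obtain ⟨y'', rfl⟩ := Submodule.Quotient.mk_surjective _ u
    obtain ⟨y, rfl⟩ := hq y''
    exact ⟨Submodule.Quotient.mk y, hζapp y⟩
  refine ⟨⟨α, β, δ, ε, ζ, hαapp, hβapp, hεapp, hζapp, hαinj, hexαβ, hexβδ, hexδε, hexεζ, hζsurj⟩, ?_⟩
  -- index bookkeeping
  have k1 : LinearMap.ker β = LinearMap.range α := LinearMap.exact_iff.mp hexαβ
  have k2 : LinearMap.ker δ = LinearMap.range β := LinearMap.exact_iff.mp hexβδ
  have k3 : LinearMap.ker ε = LinearMap.range δ := LinearMap.exact_iff.mp hexδε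
  have k4 : LinearMap.ker ζ = LinearMap.range ε := LinearMap.exact_iff.mp hexεζ
  have e1 : Module.finrank 𝕜 (LinearMap.range α) = Module.finrank 𝕜 (LinearMap.ker (D' : X' →ₗ[𝕜] Y')) :=
    LinearMap.finrank_range_of_inj hαinj
  have e2 : Module.finrank 𝕜 (LinearMap.range β) + Module.finrank 𝕜 (LinearMap.range α)
      = Module.finrank 𝕜 (LinearMap.ker (D : X →ₗ[𝕜] Y)) := by
    rw [← k1]; exact LinearMap.finrank_range_add_finrank_ker β
  have e3 : Module.finrank 𝕜 (LinearMap.range δ) + Module.finrank 𝕜 (LinearMap.range β)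
      = Module.finrank 𝕜 (LinearMap.ker (D'' : X'' →ₗ[𝕜] Y'')) := by
    rw [← k2]; exact LinearMap.finrank_range_add_finrank_ker δ
  have e4 : Module.finrank 𝕜 (LinearMap.range ε) + Module.finrank 𝕜 (LinearMap.range δ)
      = Module.finrank 𝕜 (Y' ⧸ LinearMap.range (D' : X' →ₗ[𝕜] Y')) := by
    rw [← k3]; exact LinearMap.finrank_range_add_finrank_ker ε
  have e5 : Module.finrank 𝕜 (LinearMap.range ζ) + Module.finrank 𝕜 (LinearMap.range ε)
      = Module.finrank 𝕜 (Y ⧸ LinearMap.range (D : X →ₗ[𝕜] Y)) := by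
    rw [← k4]; exact LinearMap.finrank_range_add_finrank_ker ζ
  have e6 : Module.finrank 𝕜 (LinearMap.range ζ)
      = Module.finrank 𝕜 (Y'' ⧸ LinearMap.range (D'' : X'' →ₗ[𝕜] Y'')) := by
    rw [LinearMap.range_eq_top.mpr hζsurj]
    exact finrank_top 𝕜 _
  omega
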